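/- arXiv:1810.07440 — 2 statements merged into one kernel-verified Lean document; each statement's English description precedes it below -/
import Mathlib

section
/- Let H be a real inner product space with inner product a(·,·) and norm |·|, and let V, W be subspaces satisfying the strengthened Cauchy–Schwarz inequality with constant γ ∈ [0,1): |a(v,w)| ≤ γ|v||w| for v ∈ V, w ∈ W. If x = v + w with v ∈ V, w ∈ W, then |w| ≤ (1 - γ²)^{-1/2} |x|. -/
open scoped RealInnerProductSpace

/-- Under the strengthened Cauchy–Schwarz inequality, if `x = v + w` then
`‖w‖ ≤ (1 - γ²)^{-1/2} ‖x‖`. -/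
theorem stmt_3 {H : Type*} [NormedAddCommGroup H] [InnerProductSpace ℝ H]
    (V W : Submodule ℝ H) (γ : ℝ) (hγ0 : 0 ≤ γ) (hγ1 : γ < 1)
    (hCBS : ∀ v ∈ V, ∀ w ∈ W, |⟪v, w⟫| ≤ γ * ‖v‖ * ‖w‖)
    (x v w : H) (hv : v ∈ V) (hw : w ∈ W) (hx : x = v + w) :
    ‖w‖ ≤ (Real.sqrt (1 - γ ^ 2))⁻¹ * ‖x‖ := by
  have hpos : (0:ℝ) < 1 - γ ^ 2 := by nlinarith
  have h1 : (1 - γ ^ 2) * ‖w‖ ^ 2 ≤ ‖x‖ ^ 2 := by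
    have hc := abs_le.mp (hCBS v hv w hw)
    have hn := norm_add_sq_real v w
    rw [hx]
    nlinarith [sq_nonneg (‖v‖ - γ * ‖w‖), norm_nonneg v, norm_nonneg w]
  have hs : (0:ℝ) < Real.sqrt (1 - γ ^ 2) := Real.sqrt_pos.mpr hpos
  have h2 : Real.sqrt (1 - γ ^ 2) * ‖w‖ ≤ ‖x‖ := by
    have := Real.sqrt_le_sqrt h1
    rwa [Real.sqrt_mul hpos.le, Real.sqrt_sq (norm_nonneg w),
      Real.sqrt_sq (norm_nonneg x)] at this
  rw [inv_mul_eq_div, le_div_iff₀ hs]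
  linarith
end

section
/- In the setting of Lemma 4.3: let H be a real inner product space with inner product ā and norm |·|, with subspaces V_Λ, Ṽ, V_Q such that V_Q is ā-orthogonal to both V_Λ and Ṽ, and the strengthened Cauchy–Schwarz inequality |ā(v, ṽ)| ≤ γ|v||ṽ| holds for v ∈ V_Λ, ṽ ∈ Ṽ with γ ∈ [0,1). Let e* ∈ V_Λ ⊕ Ṽ ⊕ V_Q satisfy ā(e*, v) = R(v) for all v in this space with R vanishing on V_Λ, and let e₂ ∈ Ṽ ⊕ V_Q satisfy ā(e₂, v) = R(v) for all v ∈ Ṽ ⊕ V_Q. Then |e₂| ≤ |e*| ≤ (1 - γ²)^{-1/2}|e₂|. -/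
open scoped RealInnerProductSpace

/-- Lemma 4.3 (abstract form): two-sided equivalence `|e₂| ≤ |e*| ≤ (1-γ²)^{-1/2}|e₂|`
between the Galerkin solutions on the detail space and the enriched space. -/
theorem stmt_9 {H : Type*} [NormedAddCommGroup H] [InnerProductSpace ℝ H]
    (VΛ Vt VQ : Submodule ℝ H) (R : H →ₗ[ℝ] ℝ)
    (γ : ℝ) (hγ0 : 0 ≤ γ) (hγ1 : γ < 1)
    (hCBS : ∀ v ∈ VΛ, ∀ w ∈ Vt, |⟪v, w⟫| ≤ γ * ‖v‖ * ‖w‖)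
    (horthΛ : ∀ x ∈ VΛ, ∀ y ∈ VQ, ⟪x, y⟫ = 0)
    (hortht : ∀ x ∈ Vt, ∀ y ∈ VQ, ⟪x, y⟫ = 0)
    (hRΛ : ∀ v ∈ VΛ, R v = 0)
    (eStar : H) (heStar : eStar ∈ VΛ ⊔ Vt ⊔ VQ)
    (hGalStar : ∀ v ∈ VΛ ⊔ Vt ⊔ VQ, ⟪eStar, v⟫ = R v)
    (e2 : H) (he2 : e2 ∈ Vt ⊔ VQ)
    (hGal2 : ∀ v ∈ Vt ⊔ VQ, ⟪e2, v⟫ = R v) :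
    ‖e2‖ ≤ ‖eStar‖ ∧ ‖eStar‖ ≤ (Real.sqrt (1 - γ ^ 2))⁻¹ * ‖e2‖ := by
  have hle : Vt ⊔ VQ ≤ VΛ ⊔ Vt ⊔ VQ := by
    rw [sup_assoc]; exact le_sup_right
  have hVΛle : VΛ ≤ VΛ ⊔ Vt ⊔ VQ := le_trans le_sup_left le_sup_left
  -- Part 1: ‖e2‖ ≤ ‖eStar‖
  have h1 : ‖e2‖ ≤ ‖eStar‖ := by
    have hee : ⟪eStar, e2⟫ = ⟪e2, e2⟫ := by
      rw [hGalStar e2 (hle he2), hGal2 e2 he2]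
    have hcs : ⟪eStar, e2⟫ ≤ ‖eStar‖ * ‖e2‖ := real_inner_le_norm _ _
    have hself : ⟪e2, e2⟫ = ‖e2‖ ^ 2 := real_inner_self_eq_norm_sq e2
    rcases eq_or_lt_of_le (norm_nonneg e2) with h0 | h0
    · rw [← h0]; exact norm_nonneg _
    · nlinarith [hee, hcs, hself]
  refine ⟨h1, ?_⟩
  -- decompose eStar
  have heStar' : eStar ∈ VΛ ⊔ (Vt ⊔ VQ) := by rwa [← sup_assoc]
  obtain ⟨vΛ, hvΛ, w, hw, hsum⟩ := Submodule.mem_sup.mp heStar'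
  obtain ⟨vt, hvt, vq, hvq, hwsum⟩ := Submodule.mem_sup.mp hw
  -- ⟪eStar, vΛ⟫ = 0
  have hEvΛ : ⟪eStar, vΛ⟫ = 0 := by
    rw [hGalStar vΛ (hVΛle hvΛ)]; exact hRΛ vΛ hvΛ
  -- ‖eStar‖² = ⟪e2, w⟫
  have hE2 : ‖eStar‖ ^ 2 = ⟪e2, w⟫ := by
    have : ⟪eStar, eStar⟫ = ⟪eStar, vΛ⟫ + ⟪eStar, w⟫ := by
      rw [← inner_add_right, hsum]
    rw [← real_inner_self_eq_norm_sq, this, hEvΛ, zero_add,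
      hGalStar w (hle hw), ← hGal2 w hw]
  -- ‖vt‖ ≤ ‖w‖
  have hvtq : ⟪vt, vq⟫ = 0 := hortht vt hvt vq hvq
  have hwnorm : ‖w‖ ^ 2 = ‖vt‖ ^ 2 + ‖vq‖ ^ 2 := by
    rw [← hwsum]
    have := norm_add_sq_real vt vq
    rw [hvtq] at this; linarith
  have hvtw : ‖vt‖ ≤ ‖w‖ := by
    have := sq_nonneg ‖vq‖
    nlinarith [norm_nonneg vt, norm_nonneg w]
  -- inner product bound
  have hΛq : ⟪vΛ, vq⟫ = 0 := horthΛ vΛ hvΛ vq hvq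
  have hΛw : |⟪vΛ, w⟫| ≤ γ * ‖vΛ‖ * ‖w‖ := by
    have : ⟪vΛ, w⟫ = ⟪vΛ, vt⟫ := by
      rw [← hwsum, inner_add_right, hΛq, add_zero]
    rw [this]
    calc |⟪vΛ, vt⟫| ≤ γ * ‖vΛ‖ * ‖vt‖ := hCBS vΛ hvΛ vt hvt
      _ ≤ γ * ‖vΛ‖ * ‖w‖ := by
          apply mul_le_mul_of_nonneg_left hvtw (by positivity)
  -- (1-γ²)‖w‖² ≤ ‖eStar‖²
  have hkey : (1 - γ ^ 2) * ‖w‖ ^ 2 ≤ ‖eStar‖ ^ 2 := by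
    have hexp : ‖eStar‖ ^ 2 = ‖vΛ‖ ^ 2 + 2 * ⟪vΛ, w⟫ + ‖w‖ ^ 2 := by
      rw [← hsum]; exact norm_add_sq_real vΛ w
    have habs := abs_le.mp hΛw
    nlinarith [sq_nonneg (‖vΛ‖ - γ * ‖w‖)]
  -- combine
  set s := Real.sqrt (1 - γ ^ 2) with hs
  have hspos : 0 < s := Real.sqrt_pos.mpr (by nlinarith)
  have hssq : s ^ 2 = 1 - γ ^ 2 := Real.sq_sqrt (by nlinarith)
  have hsw : s * ‖w‖ ≤ ‖eStar‖ := by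
    have h2 : (s * ‖w‖) ^ 2 ≤ ‖eStar‖ ^ 2 := by rw [mul_pow, hssq]; exact hkey
    exact (pow_le_pow_iff_left₀ (by positivity) (norm_nonneg eStar) two_ne_zero).mp h2
  have hcs2 : ⟪e2, w⟫ ≤ ‖e2‖ * ‖w‖ := real_inner_le_norm _ _
  rcases eq_or_lt_of_le (norm_nonneg eStar) with h0 | h0
  · rw [← h0]; positivity
  · rw [inv_mul_eq_div, le_div_iff₀ hspos]
    have hmul : ‖e2‖ * (s * ‖w‖) ≤ ‖e2‖ * ‖eStar‖ :=
      mul_le_mul_of_nonneg_left hsw (norm_nonneg e2)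
    nlinarith [hE2, hcs2, hmul, hspos, h0]
end
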